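/- Let ρ be a positive-definite Hermitian d×d complex matrix with tr(ρ)=1, and let L be a Hermitian d×d matrix with orthonormal eigenbasis {v_j}_{j=1}^d and corresponding real eigenvalues {λ_j}. Set M := (ρL + Lρ)/2. Then Σ_{j=1}^d (v_j† M v_j)² / (v_j† ρ v_j) = tr(ρ L²). (This expresses saturation of the Braunstein–Caves bound: a projective measurement in the eigenbasis of the symmetric logarithmic derivative L, which satisfies ∂_θρ_θ = (ρL+Lρ)/2, attains Fisher information equal to the quantum Fisher information tr(ρL²).) -/

import Mathlib

open Matrix
open scoped ComplexOrder

/-- **Saturation of the Braunstein–Caves bound.** If `ρ` is a positive-definite state with unit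
trace and `L` is Hermitian with orthonormal eigenbasis `v` and real eigenvalues `lam`, then the
projective measurement in the eigenbasis of `L` applied to the model with derivative
`M = (ρL + Lρ)/2` has Fisher information `Σ_j (v_j† M v_j)² / (v_j† ρ v_j) = tr(ρ L²)`. -/
theorem braunstein_caves_saturation {d : ℕ}
    (ρ L : Matrix (Fin d) (Fin d) ℂ)
    (hρ : ρ.PosDef) (hρtr : ρ.trace = 1) (hL : L.IsHermitian)
    (v : Fin d → (Fin d → ℂ)) (lam : Fin d → ℝ)
    (horth : ∀ i j, star (v i) ⬝ᵥ v j = if i = j then 1 else 0)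
    (heig : ∀ j, L *ᵥ v j = (lam j : ℂ) • v j)
    (M : Matrix (Fin d) (Fin d) ℂ)
    (hM : M = (2⁻¹ : ℂ) • (ρ * L + L * ρ)) :
    ∑ j, ((star (v j) ⬝ᵥ M *ᵥ v j).re) ^ 2 / ((star (v j) ⬝ᵥ ρ *ᵥ v j).re)
      = ((ρ * L * L).trace).re := by
  -- p j is the measurement probability
  set p : Fin d → ℂ := fun j => star (v j) ⬝ᵥ ρ *ᵥ v j with hp
  have hvne : ∀ j, v j ≠ 0 := by
    intro j h
    have := horth j j
    simp [h] at this
  have hppos : ∀ j, 0 < (p j).re := by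
    intro j
    have := hρ.dotProduct_mulVec_pos (hvne j)
    exact (Complex.pos_iff.mp this).1
  -- star (v j) is a left eigenvector
  have hLstar : ∀ j, star (v j) ᵥ* L = (lam j : ℂ) • star (v j) := by
    intro j
    calc star (v j) ᵥ* L = star (v j) ᵥ* (Lᴴ)ᴴ := by rw [conjTranspose_conjTranspose]
      _ = star (Lᴴ *ᵥ v j) := (star_mulVec _ _).symm
      _ = star (L *ᵥ v j) := by rw [hL.eq]
      _ = (lam j : ℂ) • star (v j) := by
          rw [heig j, star_smul]
          simp
  have key : ∀ j, star (v j) ⬝ᵥ M *ᵥ v j = (lam j : ℂ) * p j := by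
    intro j
    have h1 : star (v j) ⬝ᵥ (ρ * L) *ᵥ v j = (lam j : ℂ) * p j := by
      rw [← mulVec_mulVec, heig j, mulVec_smul, dotProduct_smul, smul_eq_mul]
    have h2 : star (v j) ⬝ᵥ (L * ρ) *ᵥ v j = (lam j : ℂ) * p j := by
      rw [← mulVec_mulVec, dotProduct_mulVec, hLstar j, smul_dotProduct, smul_eq_mul]
    rw [hM]
    simp only [smul_mulVec, dotProduct_smul, add_mulVec, dotProduct_add, h1, h2,
      smul_eq_mul]
    ring
  -- trace expansion in the orthonormal basis
  set U : Matrix (Fin d) (Fin d) ℂ := Matrix.of (fun i j => v j i) with hUdef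
  have hU : Uᴴ * U = 1 := by
    ext i j
    simp only [mul_apply, conjTranspose_apply, hUdef, Matrix.of_apply, one_apply]
    simpa [dotProduct] using horth i j
  have hU' : U * Uᴴ = 1 := mul_eq_one_comm.mp hU
  have hdiag : ∀ (A : Matrix (Fin d) (Fin d) ℂ) j,
      (Uᴴ * A * U) j j = star (v j) ⬝ᵥ A *ᵥ v j := by
    intro A j
    simp only [mul_apply, conjTranspose_apply, hUdef, Matrix.of_apply, dotProduct,
      mulVec, Finset.sum_mul, Finset.mul_sum, Pi.star_apply]
    rw [Finset.sum_comm]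
    apply Finset.sum_congr rfl
    intro k _
    apply Finset.sum_congr rfl
    intro i _
    ring
  have htr : (ρ * L * L).trace = ∑ j, star (v j) ⬝ᵥ (ρ * L * L) *ᵥ v j := by
    calc (ρ * L * L).trace = (U * Uᴴ * (ρ * L * L)).trace := by rw [hU', one_mul]
      _ = (Uᴴ * (ρ * L * L) * U).trace := by rw [← trace_mul_cycle]
      _ = ∑ j, (Uᴴ * (ρ * L * L) * U) j j := rfl
      _ = ∑ j, star (v j) ⬝ᵥ (ρ * L * L) *ᵥ v j := by
          exact Finset.sum_congr rfl fun j _ => hdiag _ j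
  have hterm : ∀ j, star (v j) ⬝ᵥ (ρ * L * L) *ᵥ v j = (lam j : ℂ)^2 * p j := by
    intro j
    rw [← mulVec_mulVec, heig j, mulVec_smul, ← mulVec_mulVec, heig j,
      mulVec_smul, dotProduct_smul, dotProduct_smul, smul_eq_mul, smul_eq_mul]
    ring
  rw [htr]
  rw [Complex.re_sum]
  apply Finset.sum_congr rfl
  intro j _
  rw [key j, hterm j]
  have hre1 : ((lam j : ℂ) * p j).re = lam j * (p j).re := by
    simp [Complex.mul_re]
  have hre2 : ((lam j : ℂ)^2 * p j).re = (lam j)^2 * (p j).re := by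
    rw [← Complex.ofReal_pow, Complex.re_ofReal_mul]
  rw [hre1, hre2]
  have hpne : (p j).re ≠ 0 := ne_of_gt (hppos j)
  have hpne' : (star (v j) ⬝ᵥ ρ *ᵥ v j).re ≠ 0 := hpne
  field_simp
  ring
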